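/- For a prime p and integer b ≥ 2 with p ≥ 5, the integer σ(b, p) = (1/3)(2b−2) p^(4b−1) (p² − 1) is divisible by 16, and its minimum over all such pairs (b, p) is attained exactly at (b, p) = (2, 5), where σ(2, 5) = 2⁴ · 5⁷. -/
import Mathlib

theorem stmt_16 (p b : ℕ) (hp : p.Prime) (hp5 : 5 ≤ p) (hb : 2 ≤ b) :
    3 ∣ (2 * b - 2) * p ^ (4 * b - 1) * (p ^ 2 - 1) ∧
    16 ∣ (2 * b - 2) * p ^ (4 * b - 1) * (p ^ 2 - 1) / 3 ∧
    (2 * 2 - 2) * 5 ^ (4 * 2 - 1) * (5 ^ 2 - 1) / 3 ≤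
      (2 * b - 2) * p ^ (4 * b - 1) * (p ^ 2 - 1) / 3 ∧
    ((2 * b - 2) * p ^ (4 * b - 1) * (p ^ 2 - 1) / 3 =
        (2 * 2 - 2) * 5 ^ (4 * 2 - 1) * (5 ^ 2 - 1) / 3 ↔ b = 2 ∧ p = 5) ∧
    (2 * 2 - 2) * 5 ^ (4 * 2 - 1) * (5 ^ 2 - 1) / 3 = 2 ^ 4 * 5 ^ 7 := by
  -- p is coprime to 24
  have hcop : Nat.Coprime p 24 := by
    rw [hp.coprime_iff_not_dvd]
    intro h
    have h24 : p ≤ 24 := Nat.le_of_dvd (by norm_num) h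
    interval_cases p <;> revert h <;> revert hp <;> decide
  -- hence p^2 ≡ 1 mod 24
  have key : ∀ r, r < 24 → Nat.gcd r 24 = 1 → r ^ 2 % 24 = 1 := by decide
  have hmod : p ^ 2 % 24 = 1 := by
    have h1 : p ^ 2 % 24 = (p % 24) ^ 2 % 24 := by rw [Nat.pow_mod]
    have h2 : Nat.gcd (p % 24) 24 = 1 := by
      have := Nat.gcd_rec 24 p
      have hc : Nat.gcd 24 p = 1 := Nat.coprime_comm.mp hcop
      rw [hc] at this
      omega
    rw [h1, key (p % 24) (Nat.mod_lt _ (by norm_num)) h2]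
  have hp2 : 25 ≤ p ^ 2 := by
    calc (25 : ℕ) = 5 ^ 2 := by norm_num
    _ ≤ p ^ 2 := Nat.pow_le_pow_left hp5 2
  obtain ⟨k, hk⟩ : 24 ∣ p ^ 2 - 1 := by
    have := Nat.div_add_mod (p ^ 2) 24
    exact ⟨p ^ 2 / 24, by omega⟩
  have hk1 : 1 ≤ k := by omega
  have hA : 2 * b - 2 = 2 * (b - 1) := by omega
  have hb1 : 1 ≤ b - 1 := by omega
  -- exact value of the division
  have heq : (2 * b - 2) * p ^ (4 * b - 1) * (p ^ 2 - 1) / 3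
      = 16 * ((b - 1) * p ^ (4 * b - 1) * k) := by
    rw [hk, hA]
    have : 2 * (b - 1) * p ^ (4 * b - 1) * (24 * k)
        = 3 * (16 * ((b - 1) * p ^ (4 * b - 1) * k)) := by ring
    rw [this, Nat.mul_div_cancel_left _ (by norm_num : (0:ℕ) < 3)]
  have hP7 : 5 ^ 7 ≤ p ^ (4 * b - 1) := by
    calc (5:ℕ) ^ 7 ≤ 5 ^ (4 * b - 1) := Nat.pow_le_pow_right (by norm_num) (by omega)
    _ ≤ p ^ (4 * b - 1) := Nat.pow_le_pow_left hp5 _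
  refine ⟨⟨(2 * b - 2) * p ^ (4 * b - 1) * (8 * k), by rw [hk]; ring⟩,
    ⟨(b - 1) * p ^ (4 * b - 1) * k, heq⟩, ?_, ?_, by norm_num⟩
  · rw [heq]
    have : (5:ℕ) ^ 7 ≤ (b - 1) * p ^ (4 * b - 1) * k := by
      calc (5:ℕ) ^ 7 ≤ p ^ (4 * b - 1) := hP7
      _ = 1 * p ^ (4 * b - 1) * 1 := by ring
      _ ≤ (b - 1) * p ^ (4 * b - 1) * k := Nat.mul_le_mul (Nat.mul_le_mul hb1 le_rfl) hk1
    norm_num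
    omega
  · constructor
    · intro h
      rw [heq] at h
      norm_num at h
      have hprod : (b - 1) * p ^ (4 * b - 1) * k = 5 ^ 7 := by omega
      have hbeq : b = 2 := by
        by_contra hne
        have hb3 : 3 ≤ b := by omega
        have h11 : (5:ℕ) ^ 11 ≤ p ^ (4 * b - 1) := by
          calc (5:ℕ) ^ 11 ≤ 5 ^ (4 * b - 1) :=
            Nat.pow_le_pow_right (by norm_num) (by omega)
          _ ≤ p ^ (4 * b - 1) := Nat.pow_le_pow_left hp5 _
        have : (5:ℕ) ^ 11 ≤ (b - 1) * p ^ (4 * b - 1) * k := by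
          calc (5:ℕ) ^ 11 ≤ p ^ (4 * b - 1) := h11
          _ = 1 * p ^ (4 * b - 1) * 1 := by ring
          _ ≤ (b - 1) * p ^ (4 * b - 1) * k := Nat.mul_le_mul (Nat.mul_le_mul hb1 le_rfl) hk1
        rw [hprod] at this
        norm_num at this
      have hpeq : p = 5 := by
        by_contra hne
        have hp6 : p ≠ 6 := by rintro rfl; norm_num at hp
        have hp7 : 7 ≤ p := by omega
        have h77 : (7:ℕ) ^ 7 ≤ p ^ (4 * b - 1) := by
          calc (7:ℕ) ^ 7 ≤ 7 ^ (4 * b - 1) :=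
            Nat.pow_le_pow_right (by norm_num) (by omega)
          _ ≤ p ^ (4 * b - 1) := Nat.pow_le_pow_left hp7 _
        have : (7:ℕ) ^ 7 ≤ (b - 1) * p ^ (4 * b - 1) * k := by
          calc (7:ℕ) ^ 7 ≤ p ^ (4 * b - 1) := h77
          _ = 1 * p ^ (4 * b - 1) * 1 := by ring
          _ ≤ (b - 1) * p ^ (4 * b - 1) * k := Nat.mul_le_mul (Nat.mul_le_mul hb1 le_rfl) hk1
        rw [hprod] at this
        norm_num at this
      exact ⟨hbeq, hpeq⟩
    · rintro ⟨rfl, rfl⟩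
      rfl
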